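/- The functions x(t) = t, y(t) = √(b² + t²/4), u(t) = 3t/(4b²) + 4t/(4b² + t²), with λ = −9/(4b²), satisfy the Sp(2)-invariant soliton equations: with τ₂ := (y²)' − x and τ₁ := (x²)' − 2x + x³/y², one has τ₁/x² + 2τ₂/y² = 0, (τ₁ − ux²)' = λx², (τ₂ − uy²)' = λy², and τ₁ + 2τ₂ = u(x² + 2y²) + 2λxy². -/

import Mathlib

/-- `x(t) = t`. -/
noncomputable def xF : ℝ → ℝ := fun t => t

/-- `y(t)² = b² + t²/4`. -/
noncomputable def y2F (b : ℝ) : ℝ → ℝ := fun t => b ^ 2 + t ^ 2 / 4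

/-- `u(t) = 3t/(4b²) + 4t/(4b² + t²)`. -/
noncomputable def uF (b : ℝ) : ℝ → ℝ :=
  fun t => 3 * t / (4 * b ^ 2) + 4 * t / (4 * b ^ 2 + t ^ 2)

/-- `τ₂ := (y²)' − x`. -/
noncomputable def tau2F (b : ℝ) : ℝ → ℝ := fun t => deriv (y2F b) t - xF t

/-- `τ₁ := (x²)' − 2x + x³/y²`. -/
noncomputable def tau1F (b : ℝ) : ℝ → ℝ :=
  fun t => deriv (fun s => xF s ^ 2) t - 2 * xF t + xF t ^ 3 / y2F b t

lemma deriv_y2F (b t : ℝ) : deriv (y2F b) t = t / 2 := by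
  have h : HasDerivAt (y2F b) (t / 2) t := by
    have : HasDerivAt (fun s : ℝ => b ^ 2 + s ^ 2 / 4) (0 + 2 * t ^ 1 / 4) t := by
      exact ((hasDerivAt_const t (b ^ 2)).add ((hasDerivAt_pow 2 t).div_const 4))
    exact this.congr_deriv (show (0 + 2 * t ^ 1 / 4 : ℝ) = t / 2 by ring)
  exact h.deriv

lemma tau2F_eq (b t : ℝ) : tau2F b t = -t / 2 := by
  simp [tau2F, deriv_y2F, xF]; ring

lemma deriv_sq (t : ℝ) : deriv (fun s : ℝ => xF s ^ 2) t = 2 * t := by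
  have : HasDerivAt (fun s : ℝ => s ^ 2) (2 * t ^ 1) t := hasDerivAt_pow 2 t
  simpa [xF] using this.deriv

lemma tau1F_eq (b t : ℝ) : tau1F b t = t ^ 3 / y2F b t := by
  simp [tau1F, deriv_sq, xF]

lemma den_ne (b : ℝ) (hb : 0 < b) (t : ℝ) : 4 * b ^ 2 + t ^ 2 ≠ 0 := by positivity

lemma y2_ne (b : ℝ) (hb : 0 < b) (t : ℝ) : y2F b t ≠ 0 := by
  have : (0:ℝ) < y2F b t := by unfold y2F; positivity
  exact this.ne'

theorem stmt12 (b : ℝ) (hb : 0 < b) :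
    (∀ t : ℝ, HasDerivAt (fun s => xF s * y2F b s) (xF t ^ 2 / 2 + y2F b t) t) ∧
    (∀ t : ℝ, tau1F b t / xF t ^ 2 + 2 * tau2F b t / y2F b t = 0) ∧
    (∀ t : ℝ, HasDerivAt (fun s => tau1F b s - uF b s * xF s ^ 2)
      (-9 / (4 * b ^ 2) * xF t ^ 2) t) ∧
    (∀ t : ℝ, HasDerivAt (fun s => tau2F b s - uF b s * y2F b s)
      (-9 / (4 * b ^ 2) * y2F b t) t) ∧
    (∀ t : ℝ, tau1F b t + 2 * tau2F b t
      = uF b t * (xF t ^ 2 + 2 * y2F b t)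
        + 2 * (-9 / (4 * b ^ 2)) * xF t * y2F b t) := by
  have hb2 : (b:ℝ) ^ 2 ≠ 0 := by positivity
  refine ⟨?_, ?_, ?_, ?_, ?_⟩
  · intro t
    have h : HasDerivAt (fun s : ℝ => s * (b ^ 2 + s ^ 2 / 4))
        (1 * (b ^ 2 + t ^ 2 / 4) + t * (2 * t ^ 1 / 4)) t := by
      have := (hasDerivAt_id t).mul
        ((hasDerivAt_const t (b ^ 2)).add ((hasDerivAt_pow 2 t).div_const 4))
      exact this.congr_deriv (by simp only [Pi.add_apply, id]; norm_num)
    have := h.congr_deriv (show 1 * (b ^ 2 + t ^ 2 / 4) + t * (2 * t ^ 1 / 4)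
        = t ^ 2 / 2 + (b ^ 2 + t ^ 2 / 4) by ring)
    simpa [xF, y2F] using this
  · intro t
    rw [tau1F_eq, tau2F_eq]
    rcases eq_or_ne t 0 with rfl | ht
    · simp [xF]
    · have h2 := y2_ne b hb t
      unfold xF y2F at *
      field_simp
      ring
  · intro t
    have hfun : (fun s => tau1F b s - uF b s * xF s ^ 2)
        = fun s : ℝ => -3 * s ^ 3 / (4 * b ^ 2) := by
      funext s
      rw [tau1F_eq]
      have h1 := den_ne b hb s
      have h2 := y2_ne b hb s
      unfold uF xF y2F at *
      field_simp
      ring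
    rw [hfun]
    have h : HasDerivAt (fun s : ℝ => -3 * s ^ 3 / (4 * b ^ 2))
        (-3 * (3 * t ^ 2) / (4 * b ^ 2)) t := by
      have := ((hasDerivAt_pow 3 t).const_mul (-3:ℝ)).div_const (4 * b ^ 2)
      simpa using this.congr_deriv (by ring)
    exact h.congr_deriv (by unfold xF; field_simp; ring)
  · intro t
    have hfun : (fun s => tau2F b s - uF b s * y2F b s)
        = fun s : ℝ => -9 * s / 4 - 3 * s ^ 3 / (16 * b ^ 2) := by
      funext s
      rw [tau2F_eq]
      have h1 := den_ne b hb s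
      unfold uF y2F at *
      field_simp
      ring
    rw [hfun]
    have h : HasDerivAt (fun s : ℝ => -9 * s / 4 - 3 * s ^ 3 / (16 * b ^ 2))
        (-9 / 4 - 3 * (3 * t ^ 2) / (16 * b ^ 2)) t := by
      have h1 : HasDerivAt (fun s : ℝ => -9 * s / 4) (-9 / 4) t := by
        have := ((hasDerivAt_id t).const_mul (-9:ℝ)).div_const 4
        simpa using this.congr_deriv (by ring)
      have h2 := ((hasDerivAt_pow 3 t).const_mul (3:ℝ)).div_const (16 * b ^ 2)
      have := h1.sub h2
      exact this.congr_deriv (by ring)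
    exact h.congr_deriv (by unfold y2F; field_simp; ring)
  · intro t
    rw [tau1F_eq, tau2F_eq]
    have h1 := den_ne b hb t
    have h2 := y2_ne b hb t
    unfold uF xF y2F at *
    field_simp
    ring
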